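/- For any tree H, W_cyc(H) ≤ M(H), where W_cyc(H) is the maximum t for which H admits a cyclically-interval t-coloring and M(H) = max over pairs of vertices (b_i, b_j) of |TP(b_i, b_j)|. -/

import Mathlib

open SimpleGraph

/-- `Q` is a `t`-cyclic interval. -/
def IsCyclicInterval (t : ℕ) (Q : Set ℕ) : Prop :=
  ∃ i₁ ∈ Set.Icc 1 t, ∃ i₂ ∈ Set.Icc 1 t,
    Q = Set.Icc (min i₁ i₂) (max i₁ i₂) ∨
    Q = Set.Icc 1 t \ (Set.Icc (min i₁ i₂) (max i₁ i₂) \ {i₁, i₂})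

/-- A proper edge `t`-coloring: colors in `[1,t]`, adjacent edges differ, all colors used. -/
def IsProperEdgeColoring {V : Type*} (G : SimpleGraph V) (t : ℕ) (φ : Sym2 V → ℕ) : Prop :=
  (∀ e ∈ G.edgeSet, φ e ∈ Set.Icc 1 t) ∧
  (∀ e₁ ∈ G.edgeSet, ∀ e₂ ∈ G.edgeSet, e₁ ≠ e₂ → (∃ x, x ∈ e₁ ∧ x ∈ e₂) → φ e₁ ≠ φ e₂) ∧
  (∀ c ∈ Set.Icc 1 t, ∃ e ∈ G.edgeSet, φ e = c)

/-- A cyclically-interval `t`-coloring. -/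
def IsCyclicIntervalColoring {V : Type*} (G : SimpleGraph V) (t : ℕ) (φ : Sym2 V → ℕ) : Prop :=
  IsProperEdgeColoring G t φ ∧
  ∀ x : V, (G.incidenceSet x).Nonempty → IsCyclicInterval t (φ '' G.incidenceSet x)

/-- An interval `t`-coloring. -/
def IsIntervalColoring {V : Type*} (G : SimpleGraph V) (t : ℕ) (φ : Sym2 V → ℕ) : Prop :=
  IsProperEdgeColoring G t φ ∧
  ∀ x : V, (G.incidenceSet x).Nonempty → ∃ a b, φ '' G.incidenceSet x = Set.Icc a b

/-- `TP(u,v)` along a path `p`. -/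
def pathTP {V : Type*} (G : SimpleGraph V) {u v : V} (p : G.Walk u v) : Set (Sym2 V) :=
  if p.length ≤ 1 then {e | e ∈ p.edges}
  else ⋃ x ∈ {w | w ∈ p.support ∧ w ≠ u ∧ w ≠ v}, G.incidenceSet x

/-- `M(H)`: maximum of `|TP(b_i,b_j)|` over pairs of vertices. -/
noncomputable def treeM {V : Type*} (G : SimpleGraph V) : ℕ :=
  sSup {n | ∃ (u v : V) (p : G.Walk u v), p.IsPath ∧ (pathTP G p).ncard = n}

noncomputable def Wcyc {V : Type*} (G : SimpleGraph V) : ℕ :=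
  sSup {t | ∃ φ, IsCyclicIntervalColoring G t φ}

noncomputable def wcyc {V : Type*} (G : SimpleGraph V) : ℕ :=
  sInf {t | ∃ φ, IsCyclicIntervalColoring G t φ}

noncomputable def Wint {V : Type*} (G : SimpleGraph V) : ℕ :=
  sSup {t | ∃ φ, IsIntervalColoring G t φ}

noncomputable def wint {V : Type*} (G : SimpleGraph V) : ℕ :=
  sInf {t | ∃ φ, IsIntervalColoring G t φ}

/-- Chromatic index: least `n` admitting a proper edge coloring with colors in `[1,n]`. -/
noncomputable def chromIndex {V : Type*} (G : SimpleGraph V) : ℕ :=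
  sInf {n | ∃ φ : Sym2 V → ℕ, (∀ e ∈ G.edgeSet, φ e ∈ Set.Icc 1 n) ∧
    (∀ e₁ ∈ G.edgeSet, ∀ e₂ ∈ G.edgeSet, e₁ ≠ e₂ → (∃ x, x ∈ e₁ ∧ x ∈ e₂) → φ e₁ ≠ φ e₂)}


namespace CycAux


variable {V : Type*} {G : SimpleGraph V}

/-- Sum of an antisymmetric weight along a walk. -/
def wsum (δ : V → V → ℤ) : {u v : V} → G.Walk u v → ℤ
  | _, _, SimpleGraph.Walk.nil => 0
  | u, _, SimpleGraph.Walk.cons (v := w) _ q => δ u w + wsum δ q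

@[simp] lemma wsum_nil (δ : V → V → ℤ) (u : V) :
    wsum δ (SimpleGraph.Walk.nil : G.Walk u u) = 0 := rfl

@[simp] lemma wsum_cons (δ : V → V → ℤ) {u w v : V} (h : G.Adj u w) (q : G.Walk w v) :
    wsum δ (SimpleGraph.Walk.cons h q) = δ u w + wsum δ q := rfl

lemma wsum_append (δ : V → V → ℤ) {u v w : V} (p : G.Walk u v) (q : G.Walk v w) :
    wsum δ (p.append q) = wsum δ p + wsum δ q := by
  induction p with
  | nil => simp
  | cons h r ih => simp [Walk.cons_append, ih]; ring

lemma wsum_concat (δ : V → V → ℤ) {u v w : V} (p : G.Walk u v) (h : G.Adj v w) :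
    wsum δ (p.concat h) = wsum δ p + δ v w := by
  rw [Walk.concat_eq_append, wsum_append]; simp

lemma IsPath.concat' {u v w : V} {p : G.Walk u v} (hp : p.IsPath) (h : G.Adj v w)
    (hw : w ∉ p.support) : (p.concat h).IsPath := by
  rw [← Walk.isPath_reverse_iff, Walk.reverse_concat, Walk.cons_isPath_iff]
  exact ⟨hp.reverse, by simpa using hw⟩

/-- A chosen path between two vertices of a connected graph. -/
noncomputable def treePath (G : SimpleGraph V) (hG : G.IsTree) (r x : V) : G.Walk r x :=
  (hG.existsUnique_path r x).exists.choose

lemma treePath_isPath (hG : G.IsTree) (r x : V) : (treePath G hG r x).IsPath :=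
  (hG.existsUnique_path r x).exists.choose_spec

lemma eq_treePath (hG : G.IsTree) {r x : V} (p : G.Walk r x) (hp : p.IsPath) :
    p = treePath G hG r x :=
  (hG.existsUnique_path r x).unique hp (treePath_isPath _ _ _)

lemma wsum_treePath_adj (hG : G.IsTree) (δ : V → V → ℤ) (hδ : ∀ a b, δ a b = - δ b a)
    (r : V) {u v : V} (h : G.Adj u v) :
    wsum δ (treePath G hG r v) = wsum δ (treePath G hG r u) + δ u v := by
  classical
  set p := treePath G hG r u with hpdef
  have hpp : p.IsPath := treePath_isPath _ _ _
  by_cases hv : v ∈ p.support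
  · have h2 : (p.dropUntil v hv).IsPath := hpp.dropUntil hv
    have hdrop : p.dropUntil v hv = SimpleGraph.Walk.cons h.symm SimpleGraph.Walk.nil :=
      (hG.existsUnique_path v u).unique h2 (by simp [Walk.cons_isPath_iff, h.ne'])
    have htake : p.takeUntil v hv = treePath G hG r v :=
      eq_treePath hG _ (hpp.takeUntil hv)
    have hspec := congrArg (wsum δ) (p.take_spec hv)
    rw [wsum_append, htake, hdrop] at hspec
    simp at hspec
    have := hδ u v
    omega
  · have hcp : (p.concat h).IsPath := IsPath.concat' hpp h hv
    have : p.concat h = treePath G hG r v := eq_treePath hG _ hcp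
    rw [← this, wsum_concat]






lemma pathTP_of_le {u v : V} {p : G.Walk u v} (h : p.length ≤ 1) :
    pathTP G p = {e | e ∈ p.edges} := if_pos h

lemma pathTP_of_lt {u v : V} {p : G.Walk u v} (h : 1 < p.length) :
    pathTP G p = ⋃ x ∈ {w | w ∈ p.support ∧ w ≠ u ∧ w ≠ v}, G.incidenceSet x :=
  if_neg (by omega)

lemma mem_inc {x y : V} (h : G.Adj x y) : s(x, y) ∈ G.incidenceSet x :=
  ⟨G.mem_edgeSet.mpr h, Sym2.mem_mk_left _ _⟩

lemma mem_inc' {x y : V} (h : G.Adj x y) : s(x, y) ∈ G.incidenceSet y :=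
  ⟨G.mem_edgeSet.mpr h, Sym2.mem_mk_right _ _⟩

/-- Union of two intersecting intervals in ℤ. -/
lemma Icc_union_Icc {a b c d z : ℤ} (h1 : z ∈ Set.Icc a b) (h2 : z ∈ Set.Icc c d) :
    Set.Icc a b ∪ Set.Icc c d = Set.Icc (min a c) (max b d) := by
  simp only [Set.mem_Icc] at h1 h2
  ext w
  simp only [Set.mem_union, Set.mem_Icc]
  omega

/-- The chain lemma: along a path, some interval of lifted colors is contained in the
colors of `TP`, and contains the colors of the two end edges. -/
lemma chain (ℓ : Sym2 V → ℤ)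
    (hpal : ∀ x : V, (G.incidenceSet x).Nonempty → ∃ a b : ℤ, ℓ '' G.incidenceSet x = Set.Icc a b) :
    ∀ {u v : V} (p : G.Walk u v), p.IsPath → 0 < p.length →
      ∃ a b : ℤ, Set.Icc a b ⊆ ℓ '' pathTP G p ∧
        (∀ e ∈ p.edges, u ∈ e → ℓ e ∈ Set.Icc a b) ∧
        (∀ e ∈ p.edges, v ∈ e → ℓ e ∈ Set.Icc a b) := by
  intro u v p
  induction p with
  | nil => intro _ h; simp at h
  | @cons u w v h q ih =>
    intro hp _
    rw [Walk.cons_isPath_iff] at hp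
    obtain ⟨hQ, huQ⟩ := hp
    by_cases hq0 : q.length = 0
    · -- base case: a single edge
      have hed : q.edges = [] := List.length_eq_zero_iff.mp (by rw [Walk.length_edges, hq0])
      refine ⟨ℓ s(u, w), ℓ s(u, w), ?_, ?_, ?_⟩
      · intro z hz
        simp only [Set.Icc_self, Set.mem_singleton_iff] at hz
        subst hz
        exact ⟨s(u, w), by rw [pathTP_of_le (by simp [hq0])]; simp, rfl⟩
      · intro e he _
        rw [Walk.edges_cons, hed] at he
        simp only [List.mem_singleton] at he
        subst he; simp
      · intro e he _
        rw [Walk.edges_cons, hed] at he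
        simp only [List.mem_singleton] at he
        subst he; simp
    · -- inductive step
      have hqn : ¬ q.Nil := by rw [Walk.nil_iff_length_eq]; exact hq0
      obtain ⟨y, hy, r, rfl⟩ := Walk.not_nil_iff.mp hqn
      obtain ⟨a, b, hsub, hfst, hlst⟩ := ih hQ (by simp)
      have hwinc : s(u, w) ∈ G.incidenceSet w := mem_inc' h
      obtain ⟨c, d, hcd⟩ := hpal w ⟨s(u, w), hwinc⟩
      have hA : ℓ s(u, w) ∈ Set.Icc c d := by rw [← hcd]; exact ⟨s(u, w), hwinc, rfl⟩
      have hyinc : s(w, y) ∈ G.incidenceSet w := mem_inc hy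
      have hB1 : ℓ s(w, y) ∈ Set.Icc c d := by rw [← hcd]; exact ⟨s(w, y), hyinc, rfl⟩
      have hB2 : ℓ s(w, y) ∈ Set.Icc a b := hfst s(w, y) (by simp) (Sym2.mem_mk_left _ _)
      have hunion := Icc_union_Icc hB1 hB2
      have hwv : w ≠ v := by
        rintro rfl
        have h1 := Walk.isPath_iff_eq_nil.mp hQ
        have h2 := congrArg Walk.length h1
        simp at h2
      have huv : u ≠ v := by
        rintro rfl
        have h1 := Walk.isPath_iff_eq_nil.mp ((Walk.cons_isPath_iff h _).mpr ⟨hQ, huQ⟩)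
        have h2 := congrArg Walk.length h1
        simp at h2
      have hlen2 : 1 < (Walk.cons h (Walk.cons hy r)).length := by simp
      have hTPw : G.incidenceSet w ⊆ pathTP G (Walk.cons h (Walk.cons hy r)) := by
        rw [pathTP_of_lt hlen2]
        exact Set.subset_biUnion_of_mem (show w ∈ {w' | w' ∈ _ ∧ w' ≠ u ∧ w' ≠ v} from
          ⟨by simp [Walk.support_cons], h.ne', hwv⟩)
      have hTPq : pathTP G (Walk.cons hy r) ⊆ pathTP G (Walk.cons h (Walk.cons hy r)) := by
        by_cases hr0 : (Walk.cons hy r).length ≤ 1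
        · rw [pathTP_of_le hr0]
          intro e he
          have hre : r.edges = [] := List.length_eq_zero_iff.mp (by
            rw [Walk.length_edges]
            simp only [Walk.length_cons] at hr0
            omega)
          rw [Walk.edges_cons, hre] at he
          simp only [List.mem_singleton] at he
          exact hTPw (by rw [show e = s(w,y) from he]; exact hyinc)
        · rw [pathTP_of_lt (by omega), pathTP_of_lt hlen2]
          apply Set.biUnion_subset_biUnion_left
          rintro z ⟨hz1, hz2, hz3⟩
          refine ⟨by simp only [Walk.support_cons]; exact List.mem_cons_of_mem _ hz1, ?_, hz3⟩
          rintro rfl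
          exact huQ hz1
      refine ⟨min c a, max d b, ?_, ?_, ?_⟩
      · intro z hz
        rw [← hunion] at hz
        rcases hz with hz | hz
        · rw [← hcd] at hz
          obtain ⟨e, he, rfl⟩ := hz
          exact ⟨e, hTPw he, rfl⟩
        · obtain ⟨e, he, rfl⟩ := hsub hz
          exact ⟨e, hTPq he, rfl⟩
      · intro e he hue
        rw [Walk.edges_cons] at he
        rcases List.mem_cons.mp he with rfl | he'
        · simp only [Set.mem_Icc] at hA ⊢; omega
        · exfalso
          obtain ⟨z, rfl⟩ := Sym2.mem_iff_exists.mp hue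
          exact huQ (Walk.fst_mem_support_of_mem_edges _ he')
      · intro e he hve
        rw [Walk.edges_cons] at he
        rcases List.mem_cons.mp he with rfl | he'
        · exfalso
          rcases Sym2.mem_iff.mp hve with rfl | rfl
          · exact huv rfl
          · exact hwv rfl
        · have hm := hlst e he' hve
          simp only [Set.mem_Icc] at hm ⊢
          omega


lemma exists_path_to_edge (hG : G.IsTree) (x : V) (e : Sym2 V) (he : e ∈ G.edgeSet) :
    ∃ (z : V) (p : G.Walk x z), p.IsPath ∧ e ∈ p.edges ∧ z ∈ e := by
  classical
  induction e using Sym2.ind with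
  | _ c d =>
    have hadj : G.Adj c d := G.mem_edgeSet.mp he
    set p := treePath G hG x c with hpdef
    have hp : p.IsPath := treePath_isPath _ _ _
    by_cases hd : d ∈ p.support
    · refine ⟨c, p, hp, ?_, Sym2.mem_mk_left _ _⟩
      have hdrop : p.dropUntil d hd = SimpleGraph.Walk.cons hadj.symm SimpleGraph.Walk.nil :=
        (hG.existsUnique_path d c).unique (hp.dropUntil hd)
          (by simp [Walk.cons_isPath_iff, hadj.ne'])
      have hmem : s(d, c) ∈ p.edges := by
        apply Walk.edges_dropUntil_subset p hd
        rw [hdrop]; simp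
      rwa [Sym2.eq_swap] at hmem
    · refine ⟨d, p.concat hadj, IsPath.concat' hp hadj hd, ?_, Sym2.mem_mk_right _ _⟩
      simp [Walk.edges_concat]

lemma exists_path_between_edges (hG : G.IsTree) {e1 e2 : Sym2 V}
    (h1 : e1 ∈ G.edgeSet) (h2 : e2 ∈ G.edgeSet) :
    ∃ (u z : V) (p : G.Walk u z), p.IsPath ∧ u ∈ e1 ∧ z ∈ e2 ∧
      e1 ∈ p.edges ∧ e2 ∈ p.edges := by
  classical
  induction e1 using Sym2.ind with
  | _ a b =>
    have hab : G.Adj a b := G.mem_edgeSet.mp h1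
    obtain ⟨z, p, hp, he2, hz⟩ := exists_path_to_edge hG a e2 h2
    by_cases h1p : s(a, b) ∈ p.edges
    · exact ⟨a, z, p, hp, Sym2.mem_mk_left _ _, hz, h1p, he2⟩
    · have hbp : b ∉ p.support := by
        intro hb
        have htake : p.takeUntil b hb = SimpleGraph.Walk.cons hab SimpleGraph.Walk.nil :=
          (hG.existsUnique_path a b).unique (hp.takeUntil hb)
            (by simp [Walk.cons_isPath_iff, hab.ne])
        apply h1p
        apply Walk.edges_takeUntil_subset p hb
        rw [htake]; simp
      refine ⟨b, z, SimpleGraph.Walk.cons hab.symm p, (Walk.cons_isPath_iff _ _).mpr ⟨hp, hbp⟩,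
        Sym2.mem_mk_right _ _, hz, ?_, ?_⟩
      · rw [Walk.edges_cons, Sym2.eq_swap]; exact List.mem_cons_self
      · rw [Walk.edges_cons]; exact List.mem_cons_of_mem _ he2

lemma arc_rep {t : ℕ} {Q : Set ℕ} (h : IsCyclicInterval t Q) :
    (∃ m M : ℕ, 1 ≤ m ∧ m ≤ M ∧ M ≤ t ∧ Q = Set.Icc m M) ∨
    (∃ m M : ℕ, 1 ≤ m ∧ m < M ∧ M ≤ t ∧ Q = Set.Icc 1 m ∪ Set.Icc M t) := by
  obtain ⟨i, hi, j, hj, hQ | hQ⟩ := h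
  · simp only [Set.mem_Icc] at hi hj
    exact Or.inl ⟨min i j, max i j, by omega, by omega, by omega, hQ⟩
  · simp only [Set.mem_Icc] at hi hj
    have hQ' : Q = Set.Icc 1 (min i j) ∪ Set.Icc (max i j) t := by
      rw [hQ]
      ext z
      simp only [Set.mem_diff, Set.mem_Icc, Set.mem_union, Set.mem_insert_iff,
        Set.mem_singleton_iff]
      omega
    by_cases hmM : min i j < max i j
    · exact Or.inr ⟨min i j, max i j, by omega, hmM, by omega, hQ'⟩
    · refine Or.inl ⟨1, t, le_rfl, by omega, le_rfl, ?_⟩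
      rw [hQ']
      ext z
      simp only [Set.mem_union, Set.mem_Icc]
      omega

end CycAux

/-- Corollary: for any tree `H`, `W_cyc(H) ≤ M(H)`. -/
theorem stmt5 {V : Type*} [Fintype V] (H : SimpleGraph V) (hH : H.IsTree)
    (hE : H.edgeSet.Nonempty) : Wcyc H ≤ treeM H := by
  classical
  apply csSup_le'
  rintro t ⟨φ, hcol, hpalcyc⟩
  have hbdd : BddAbove {n | ∃ (u v : V) (p : H.Walk u v), p.IsPath ∧ (pathTP H p).ncard = n} := by
    refine ⟨(Set.univ : Set (Sym2 V)).ncard, ?_⟩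
    rintro k ⟨u, v, p, hp, rfl⟩
    exact Set.ncard_le_ncard (Set.subset_univ _) Set.finite_univ
  have hle : ∀ {u v : V} (p : H.Walk u v), p.IsPath → t ≤ (pathTP H p).ncard → t ≤ treeM H := by
    intro u v p hp hn
    exact le_trans hn (le_csSup hbdd ⟨u, v, p, hp, rfl⟩)
  obtain ⟨e0, he0⟩ := hE
  -- choose a representation for every palette
  set pal : V → Set ℕ := fun x => φ '' H.incidenceSet x with hpal_def
  have hrep0 : ∀ x : V, ∃ (m M : ℕ) (bb : Bool), (H.incidenceSet x).Nonempty →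
      (1 ≤ m ∧ M ≤ t ∧ ((bb = false ∧ m ≤ M ∧ pal x = Set.Icc m M) ∨
        (bb = true ∧ m < M ∧ pal x = Set.Icc 1 m ∪ Set.Icc M t))) := by
    intro x
    by_cases hx : (H.incidenceSet x).Nonempty
    · rcases CycAux.arc_rep (hpalcyc x hx) with ⟨m, M, h1, h2, h3, h4⟩ | ⟨m, M, h1, h2, h3, h4⟩
      · exact ⟨m, M, false, fun _ => ⟨h1, h3, Or.inl ⟨rfl, h2, h4⟩⟩⟩
      · exact ⟨m, M, true, fun _ => ⟨h1, h3, Or.inr ⟨rfl, h2, h4⟩⟩⟩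
    · exact ⟨1, 1, false, fun hx' => absurd hx' hx⟩
  choose mf Mf bf hrep using hrep0
  set χ : V → ℕ → ℤ := fun x c => if bf x = true ∧ c ≤ mf x then 1 else 0 with hχ
  set δ : V → V → ℤ := fun a b' => χ a (φ s(a, b')) - χ b' (φ s(a, b')) with hδ
  have hδa : ∀ a b', δ a b' = - δ b' a := by
    intro a b'
    simp only [hδ]
    rw [Sym2.eq_swap]
    ring
  obtain ⟨r⟩ : Nonempty V := hH.isConnected.nonempty
  set σ : V → ℤ := fun x => CycAux.wsum δ (CycAux.treePath H hH r x) with hσ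
  have hσadj : ∀ {a b' : V}, H.Adj a b' → σ b' = σ a + δ a b' := by
    intro a b' hab
    exact CycAux.wsum_treePath_adj hH δ hδa r hab
  have hsymm : ∀ (a b' : V),
      (if H.Adj a b' then (t : ℤ) * σ a + (φ s(a, b') : ℤ) + t * χ a (φ s(a, b')) else 0) =
      (if H.Adj b' a then (t : ℤ) * σ b' + (φ s(b', a) : ℤ) + t * χ b' (φ s(b', a)) else 0) := by
    intro a b'
    by_cases hab : H.Adj a b'
    · rw [if_pos hab, if_pos hab.symm, Sym2.eq_swap (a := b'), hσadj hab]
      simp only [hδ]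
      ring
    · rw [if_neg hab, if_neg (fun hc => hab hc.symm)]
  set ℓ : Sym2 V → ℤ := Sym2.lift ⟨fun a b' =>
      if H.Adj a b' then (t : ℤ) * σ a + (φ s(a, b') : ℤ) + t * χ a (φ s(a, b')) else 0, hsymm⟩
    with hℓ
  have hℓadj : ∀ {a b' : V}, H.Adj a b' →
      ℓ s(a, b') = (t : ℤ) * σ a + (φ s(a, b') : ℤ) + t * χ a (φ s(a, b')) := by
    intro a b' hab
    rw [hℓ, Sym2.lift_mk]
    exact if_pos hab
  -- lifted palettes are integer intervals
  have hpal' : ∀ x : V, (H.incidenceSet x).Nonempty →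
      ∃ a b : ℤ, ℓ '' H.incidenceSet x = Set.Icc a b := by
    intro x hx
    obtain ⟨h1m, hMt, hcase⟩ := hrep x hx
    have himg : ℓ '' H.incidenceSet x =
        (fun c : ℕ => (t : ℤ) * σ x + (c : ℤ) + t * χ x c) '' pal x := by
      rw [hpal_def, Set.image_image]
      apply Set.image_congr
      intro e he
      obtain ⟨y, rfl⟩ := Sym2.mem_iff_exists.mp he.2
      exact hℓadj (H.mem_edgeSet.mp he.1)
    rcases hcase with ⟨hb, hmM, hpalx⟩ | ⟨hb, hmM, hpalx⟩
    · refine ⟨(t : ℤ) * σ x + mf x, (t : ℤ) * σ x + Mf x, ?_⟩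
      rw [himg, hpalx]
      ext z
      simp only [Set.mem_image, Set.mem_Icc, hχ, hb]
      constructor
      · rintro ⟨c, hc, rfl⟩
        simp only [Bool.false_eq_true, false_and, if_false]
        omega
      · intro hz
        refine ⟨(z - (t : ℤ) * σ x).toNat, by omega, ?_⟩
        simp only [Bool.false_eq_true, false_and, if_false]
        omega
    · refine ⟨(t : ℤ) * σ x + Mf x, (t : ℤ) * σ x + t + mf x, ?_⟩
      rw [himg, hpalx]
      ext z
      simp only [Set.mem_image, Set.mem_union, Set.mem_Icc, hχ, hb, true_and]
      constructor
      · rintro ⟨c, hc | hc, rfl⟩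
        · rw [if_pos (by omega : c ≤ mf x)]
          omega
        · rw [if_neg (by omega : ¬(c ≤ mf x))]
          omega
      · intro hz
        by_cases hzt : z ≤ (t : ℤ) * σ x + t
        · refine ⟨(z - (t : ℤ) * σ x).toNat, Or.inr (by omega), ?_⟩
          rw [if_neg (by omega : ¬((z - (t : ℤ) * σ x).toNat ≤ mf x))]
          omega
        · refine ⟨(z - (t : ℤ) * σ x - t).toNat, Or.inl (by omega), ?_⟩
          rw [if_pos (by omega : (z - (t : ℤ) * σ x - t).toNat ≤ mf x)]
          omega
  -- each lifted color is congruent to the original color mod t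
  have hres : ∀ e ∈ H.edgeSet, ∃ k : ℤ, ℓ e = (t : ℤ) * k + (φ e : ℤ) := by
    intro e
    induction e using Sym2.ind with
    | _ a b' =>
      intro he
      exact ⟨σ a + χ a (φ s(a, b')), by rw [hℓadj (H.mem_edgeSet.mp he)]; ring⟩
  -- extremal edges
  have hEfin : H.edgeSet.Finite := Set.toFinite _
  obtain ⟨emax, hemax, hmax⟩ := hEfin.toFinset.exists_max_image ℓ ⟨e0, hEfin.mem_toFinset.mpr he0⟩
  obtain ⟨emin, hemin, hmin⟩ := hEfin.toFinset.exists_min_image ℓ ⟨e0, hEfin.mem_toFinset.mpr he0⟩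
  rw [Set.Finite.mem_toFinset] at hemax hemin
  have hmax' : ∀ e ∈ H.edgeSet, ℓ e ≤ ℓ emax := fun e he => hmax e (hEfin.mem_toFinset.mpr he)
  have hmin' : ∀ e ∈ H.edgeSet, ℓ emin ≤ ℓ e := fun e he => hmin e (hEfin.mem_toFinset.mpr he)
  -- spread of the lift is at least t
  have hspread : (t : ℤ) ≤ ℓ emax - ℓ emin + 1 := by
    have hcols0 : ∀ c : ℕ, ∃ e : Sym2 V, c ∈ Set.Icc 1 t → e ∈ H.edgeSet ∧ φ e = c := by
      intro c
      by_cases hc : c ∈ Set.Icc 1 t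
      · obtain ⟨e, he, hfe⟩ := hcol.2.2 c hc
        exact ⟨e, fun _ => ⟨he, hfe⟩⟩
      · exact ⟨e0, fun h => absurd h hc⟩
    choose ec hec using hcols0
    have hf : ∀ c ∈ Finset.Icc 1 t, ℓ (ec c) ∈ Finset.Icc (ℓ emin) (ℓ emax) := by
      intro c hc
      rw [Finset.mem_Icc] at hc
      obtain ⟨he, _⟩ := hec c (Set.mem_Icc.mpr hc)
      rw [Finset.mem_Icc]
      exact ⟨hmin' _ he, hmax' _ he⟩
    have hinj : Set.InjOn (fun c : ℕ => ℓ (ec c)) (Finset.Icc 1 t) := by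
      intro c hc c' hc' hcc
      simp only [Finset.coe_Icc, Set.mem_Icc] at hc hc'
      obtain ⟨he, hfe⟩ := hec c (Set.mem_Icc.mpr hc)
      obtain ⟨he', hfe'⟩ := hec c' (Set.mem_Icc.mpr hc')
      obtain ⟨k, hk⟩ := hres _ he
      obtain ⟨k', hk'⟩ := hres _ he'
      simp only at hcc
      rw [hk, hk', hfe, hfe'] at hcc
      have hdvd : (t : ℤ) ∣ ((c : ℤ) - (c' : ℤ)) := ⟨k' - k, by linarith⟩
      have hz := Int.eq_zero_of_abs_lt_dvd hdvd (by rw [abs_lt]; omega)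
      omega
    have hcard := Finset.card_le_card_of_injOn _ hf hinj
    rw [Nat.card_Icc, Int.card_Icc] at hcard
    have hmm := hmax' emin hemin
    omega
  -- the path between the extremal edges
  obtain ⟨u, z, p, hp, hu, hz, hep1, hep2⟩ := CycAux.exists_path_between_edges hH hemin hemax
  have hplen : 0 < p.length := by
    rw [← Walk.length_edges]
    exact List.length_pos_iff.mpr (List.ne_nil_of_mem hep1)
  obtain ⟨a, b, hsub, hfst, hlst⟩ := CycAux.chain ℓ hpal' p hp hplen
  have h1 : ℓ emin ∈ Set.Icc a b := hfst emin hep1 hu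
  have h2 : ℓ emax ∈ Set.Icc a b := hlst emax hep2 hz
  have hIccsub : Set.Icc (ℓ emin) (ℓ emax) ⊆ ℓ '' pathTP H p := by
    intro w hw
    apply hsub
    simp only [Set.mem_Icc] at h1 h2 hw ⊢
    omega
  have hTPfin : (pathTP H p).Finite := Set.toFinite _
  have hcount : t ≤ (pathTP H p).ncard := by
    have h3 : (Set.Icc (ℓ emin) (ℓ emax)).ncard ≤ (ℓ '' pathTP H p).ncard :=
      Set.ncard_le_ncard hIccsub (hTPfin.image ℓ)
    have h4 : (ℓ '' pathTP H p).ncard ≤ (pathTP H p).ncard := Set.ncard_image_le hTPfin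
    have h5 : (Set.Icc (ℓ emin) (ℓ emax)).ncard = (ℓ emax + 1 - ℓ emin).toNat := by
      rw [← Finset.coe_Icc, Set.ncard_coe_finset, Int.card_Icc]
    omega
  exact hle p hp hcount
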